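/- Let A be a fitting algorithm for conjunctive queries that, on every input collection of labeled examples for which a strongly most-general fitting CQ exists, outputs a strongly most-general fitting CQ. Then A is not a sample-efficient PAC learning algorithm; that is, there is no polynomial function m witnessing the PAC learning property for A. -/

import Mathlib

/-! ## Basic setting: schemas, instances, homomorphisms, conjunctive queries -/

/-- A schema: a type of relation symbols, each with an associated arity. -/
structure Schema where
  Rel : Type
  arity : Rel → ℕ

/-- A fact over a schema `S`: a relation symbol of `S` applied to a tuple of values
(values are natural numbers) whose length is the arity of the symbol. -/
structure DBFact (S : Schema) where
  rel : S.Rel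
  args : List ℕ
  arity_eq : args.length = S.arity rel

/-- A database instance over `S`: a finite set of facts. -/
structure Instance (S : Schema) where
  facts : Set (DBFact S)
  finite : facts.Finite

/-- The active domain of an instance: all values occurring in its facts. -/
def Instance.adom {S : Schema} (I : Instance S) : Set ℕ :=
  { v | ∃ f ∈ I.facts, v ∈ f.args }

/-- The image of a fact under a map on values. -/
def DBFact.map {S : Schema} (h : ℕ → ℕ) (f : DBFact S) : DBFact S :=
  ⟨f.rel, f.args.map h, by simpa using f.arity_eq⟩

/-- `h` is a homomorphism from `I` to `J`: the image of every fact of `I` is a fact of `J`. -/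
def IsHom {S : Schema} (I J : Instance S) (h : ℕ → ℕ) : Prop :=
  ∀ f ∈ I.facts, f.map h ∈ J.facts

/-- A pointed instance: an instance together with a distinguished `k`-tuple of values. -/
abbrev PInst (S : Schema) (k : ℕ) := Instance S × (Fin k → ℕ)

/-- A pointed instance is a (valid) data example if its distinguished tuple lies in the
active domain. -/
def IsExample {S : Schema} {k : ℕ} (e : PInst S k) : Prop :=
  ∀ i, e.2 i ∈ e.1.adom

/-- `(I,a) → (J,b)`: there is a homomorphism from `I` to `J` mapping `a` to `b`. -/
def PHom {S : Schema} {k : ℕ} (e e' : PInst S k) : Prop :=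
  ∃ h : ℕ → ℕ, IsHom e.1 e'.1 h ∧ ∀ i, h (e.2 i) = e'.2 i

/-- A `k`-ary conjunctive query over `S`: a finite set of atoms (facts over variables,
where variables are natural numbers) together with a `k`-tuple of answer variables. -/
structure CQ (S : Schema) (k : ℕ) where
  atoms : Set (DBFact S)
  finite : atoms.Finite
  ans : Fin k → ℕ

/-- `q(I)`: the set of `k`-tuples `a` over the active domain of `I` such that some
assignment of the variables of `q` into `I` maps every atom to a fact of `I`
and the answer variables to `a`. -/
def CQ.eval {S : Schema} {k : ℕ} (q : CQ S k) (I : Instance S) : Set (Fin k → ℕ) :=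
  { a | (∀ i, a i ∈ I.adom) ∧
        ∃ h : ℕ → ℕ, (∀ f ∈ q.atoms, f.map h ∈ I.facts) ∧ ∀ i, h (q.ans i) = a i }

/-- Containment `q₁ ⊆ q₂` : `q₁(I) ⊆ q₂(I)` for all instances `I`. -/
def CQ.contained {S : Schema} {k : ℕ} (q₁ q₂ : CQ S k) : Prop :=
  ∀ I : Instance S, q₁.eval I ⊆ q₂.eval I

/-- Equivalence of CQs: mutual containment. -/
def CQ.equiv {S : Schema} {k : ℕ} (q₁ q₂ : CQ S k) : Prop :=
  q₁.contained q₂ ∧ q₂.contained q₁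

/-- A collection of labeled examples `E = (E⁺, E⁻)`. -/
structure LabeledExamples (S : Schema) (k : ℕ) where
  pos : Set (PInst S k)
  neg : Set (PInst S k)

/-- `q` fits `E`: every element of `E⁺` is a positive example for `q` and every element
of `E⁻` is a negative example for `q`. -/
def CQ.fits {S : Schema} {k : ℕ} (q : CQ S k) (E : LabeledExamples S k) : Prop :=
  (∀ e ∈ E.pos, e.2 ∈ q.eval e.1) ∧ (∀ e ∈ E.neg, e.2 ∉ q.eval e.1)

/-! ## Extremal fitting CQs -/

/-- `q` is a most-specific fitting CQ for `E`. -/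
def IsMostSpecificFit {S : Schema} {k : ℕ} (q : CQ S k) (E : LabeledExamples S k) : Prop :=
  q.fits E ∧ ∀ q' : CQ S k, q'.fits E → q.contained q'

/-- `q` is a strongly most-general fitting CQ for `E`. -/
def IsStronglyMostGeneralFit {S : Schema} {k : ℕ} (q : CQ S k) (E : LabeledExamples S k) : Prop :=
  q.fits E ∧ ∀ q' : CQ S k, q'.fits E → q'.contained q

/-- `q` is a weakly most-general fitting CQ for `E`. -/
def IsWeaklyMostGeneralFit {S : Schema} {k : ℕ} (q : CQ S k) (E : LabeledExamples S k) : Prop :=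
  q.fits E ∧ ∀ q' : CQ S k, q'.fits E → q.contained q' → q.equiv q'

/-- `B` is a (finite) basis of most-general fitting CQs for `E`. -/
def IsBasisOfMostGeneralFits {S : Schema} {k : ℕ} (B : Set (CQ S k))
    (E : LabeledExamples S k) : Prop :=
  B.Finite ∧ (∀ q ∈ B, q.fits E) ∧ ∀ q' : CQ S k, q'.fits E → ∃ q ∈ B, q'.contained q

/-! ## Canonical examples and relativized homomorphism dualities -/

/-- The canonical example `e_q` of a CQ `q`: its atoms as facts, pointed at the
answer variables. -/
def CQ.canonEx {S : Schema} {k : ℕ} (q : CQ S k) : PInst S k :=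
  (⟨q.atoms, q.finite⟩, q.ans)

/-- The canonical CQ of a pointed instance. -/
def canonCQ {S : Schema} {k : ℕ} (e : PInst S k) : CQ S k :=
  ⟨e.1.facts, e.1.finite, e.2⟩

/-- `(F, D)` is a homomorphism duality relative to the pointed instance `e`:
for every data example `e'` that maps homomorphically into `e`,
some element of `F` maps homomorphically into `e'` iff `e'` maps homomorphically
into no element of `D`. -/
def IsHomDualityRel {S : Schema} {k : ℕ} (e : PInst S k) (F D : Set (PInst S k)) : Prop :=
  ∀ e' : PInst S k, IsExample e' → PHom e' e →
    ((∃ f ∈ F, PHom f e') ↔ ∀ d ∈ D, ¬ PHom e' d)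

/-! ## Direct products -/

/-- The product of two facts with the same relation symbol, pairing values positionally
via the pairing function `Nat.pair`. -/
def DBFact.prod {S : Schema} (f g : DBFact S) (h : f.rel = g.rel) : DBFact S :=
  ⟨f.rel, List.zipWith Nat.pair f.args g.args, by
    rw [List.length_zipWith, f.arity_eq, g.arity_eq, h, min_self]⟩

/-- The direct product of two instances: all facts `R(⟨a₁,b₁⟩, …, ⟨aₙ,bₙ⟩)` with
`R(a₁,…,aₙ)` a fact of `I` and `R(b₁,…,bₙ)` a fact of `J`. -/
def Instance.prod {S : Schema} (I J : Instance S) : Instance S where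
  facts := { f | ∃ g ∈ I.facts, ∃ g' ∈ J.facts, ∃ h : g.rel = g'.rel, f = DBFact.prod g g' h }
  finite := by
    classical
    apply Set.Finite.subset (((I.finite.prod J.finite).image
      (fun p : DBFact S × DBFact S =>
        if h : p.1.rel = p.2.rel then DBFact.prod p.1 p.2 h else p.1)))
    rintro f ⟨g, hg, g', hg', h, rfl⟩
    exact ⟨(g, g'), ⟨hg, hg'⟩, dif_pos h⟩

/-- The direct product of two pointed instances. -/
def PInst.prod {S : Schema} {k : ℕ} (e e' : PInst S k) : PInst S k :=
  (e.1.prod e'.1, fun i => Nat.pair (e.2 i) (e'.2 i))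

/-! ## Path instances and path examples -/

/-- `I` is a path instance with chain values `a 0, …, a n` and chain relations
`R 1, …, R n`: its facts are the binary chain facts `R i (a (i-1), a i)` together
with unary facts on values `a j` with `j ≥ 1`. -/
def IsPathInstanceOn {S : Schema} (I : Instance S) (n : ℕ) (a : ℕ → ℕ) (R : ℕ → S.Rel) : Prop :=
  Set.InjOn a (Set.Iic n) ∧
  (∀ i, 1 ≤ i → i ≤ n → ∃ f ∈ I.facts, f.rel = R i ∧ f.args = [a (i - 1), a i]) ∧
  (∀ f ∈ I.facts,
      (∃ i, 1 ≤ i ∧ i ≤ n ∧ f.rel = R i ∧ f.args = [a (i - 1), a i]) ∨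
      (∃ j, 1 ≤ j ∧ j ≤ n ∧ f.args = [a j]))

/-- A path example: a unary pointed instance whose instance is a path instance and whose
distinguished value is the first value of the path. -/
def IsPathExample {S : Schema} (e : PInst S 1) : Prop :=
  ∃ (n : ℕ) (a : ℕ → ℕ) (R : ℕ → S.Rel), IsPathInstanceOn e.1 n a R ∧ e.2 0 = a 0
/-! ## PAC learning -/

open scoped BigOperators

/-- The error of a hypothesis CQ `q` relative to a target CQ `qT` and a probability
distribution `P` over pointed instances: the probability that a randomly drawn
example is labeled differently by `q` and by `qT`. -/
noncomputable def cqError {S : Schema} {k : ℕ} (P : PMF (PInst S k)) (qT q : CQ S k) :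
    ENNReal :=
  ∑' e : PInst S k,
    Set.indicator { e : PInst S k | e.2 ∈ symmDiff (q.eval e.1) (qT.eval e.1) }
      (fun e => P e) e

/-- The probability, under `N` i.i.d. draws from `P`, of a set `T` of samples. -/
noncomputable def iidProb {α : Type*} (P : PMF α) (N : ℕ) (T : Set (Fin N → α)) : ENNReal :=
  ∑' s : Fin N → α, Set.indicator T (fun s => ∏ i, P (s i)) s

/-- The collection of labeled examples obtained from a sample `s` of examples,
labeled according to the target CQ `qT`. -/
def labeledOf {S : Schema} {k : ℕ} (qT : CQ S k) {N : ℕ} (s : Fin N → PInst S k) :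
    LabeledExamples S k :=
  ⟨{ e | (∃ i, s i = e) ∧ e.2 ∈ qT.eval e.1 },
   { e | (∃ i, s i = e) ∧ e.2 ∉ qT.eval e.1 }⟩

/-- A (deterministic) algorithm taking collections of labeled examples over any schema
and arity to CQs. -/
def CQAlgorithm : Type 1 :=
  ∀ (S : Schema) (k : ℕ), LabeledExamples S k → CQ S k

/-- The size of a finite schema (its number of relation symbols together with
their arities). -/
noncomputable def Schema.size (S : Schema) [Fintype S.Rel] : ℕ :=
  ∑ R : S.Rel, (S.arity R + 1)

/-- `m` witnesses that `A` is a PAC learning algorithm: for all `ε, δ ∈ (0,1)`, all finite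
schemas `S`, all bounds `sQ, sE`, all probability distributions `P` over examples over `S`
with at most `sE` facts, and all target CQs `qT` with at most `sQ` atoms: when `A` is run
on at least `m (1/δ) (1/ε) |S| sQ sE` examples drawn i.i.d. from `P` and labeled by `qT`,
then with probability at least `1 - δ` over the sample, the returned CQ has error at
most `ε`. -/
def PACWitness (A : CQAlgorithm) (m : ℝ → ℝ → ℕ → ℕ → ℕ → ℕ) : Prop :=
  ∀ (ε δ : ℝ), 0 < ε → ε < 1 → 0 < δ → δ < 1 →
  ∀ (S : Schema) [Fintype S.Rel], ∀ (k sQ sE : ℕ) (P : PMF (PInst S k)),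
    (∀ e ∈ P.support, IsExample e ∧ e.1.facts.ncard ≤ sE) →
    ∀ qT : CQ S k, qT.atoms.ncard ≤ sQ →
    ∀ N : ℕ, m (1 / δ) (1 / ε) S.size sQ sE ≤ N →
      ENNReal.ofReal (1 - δ) ≤
        iidProb P N { s | cqError P qT (A S k (labeledOf qT s)) ≤ ENNReal.ofReal ε }

/-- `m` is bounded by a polynomial in its five arguments. -/
def IsPolyBounded (m : ℝ → ℝ → ℕ → ℕ → ℕ → ℕ) : Prop :=
  ∃ p : MvPolynomial (Fin 5) ℝ, ∀ (x y : ℝ) (a b c : ℕ),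
    (m x y a b c : ℝ) ≤ MvPolynomial.eval ![x, y, (a : ℝ), (b : ℝ), (c : ℝ)] p

/-- `A` is a sample-efficient PAC learning algorithm: some polynomially bounded
function `m` witnesses the PAC learning property for `A`. -/
def IsSampleEfficientPAC (A : CQAlgorithm) : Prop :=
  ∃ m : ℝ → ℝ → ℕ → ℕ → ℕ → ℕ, IsPolyBounded m ∧ PACWitness A m

/-! ## Auxiliary development -/

namespace MGAux

noncomputable section
open Classical

def Ssch : Schema := ⟨Bool, fun _ => 2⟩

instance : Fintype Ssch.Rel := inferInstanceAs (Fintype Bool)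

def mkF (c : Bool) (u v : ℕ) : DBFact Ssch := ⟨c, [u, v], rfl⟩

lemma mkF_inj {c c' u u' v v' : _} (h : mkF c u v = mkF c' u' v') :
    c = c' ∧ u = u' ∧ v = v' := by
  injection h with h1 h2
  simp only [List.cons.injEq, and_true] at h2
  exact ⟨h1, h2.1, h2.2⟩

lemma mkF_map (h : ℕ → ℕ) (c : Bool) (u v : ℕ) :
    (mkF c u v).map h = mkF c (h u) (h v) := rfl

lemma map_id (f : DBFact Ssch) : f.map id = f := by
  cases f with
  | mk r a h => simp [DBFact.map]

lemma map_map (g h : ℕ → ℕ) (f : DBFact Ssch) :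
    (f.map g).map h = f.map (h ∘ g) := by
  cases f with
  | mk r a he => simp [DBFact.map]

lemma exists_mkF (f : DBFact Ssch) : ∃ c u v, f = mkF c u v := by
  obtain ⟨c, args, hlen⟩ := f
  have : args.length = 2 := hlen
  obtain ⟨u, v, rfl⟩ := List.length_eq_two.mp this
  exact ⟨c, u, v, rfl⟩

variable (n : ℕ)

/-- facts of the "layered" positive instance: both labels along a path `0,…,n`. -/
def Lfacts : Set (DBFact Ssch) := { f | ∃ (c : Bool) (i : ℕ), i < n ∧ f = mkF c i (i + 1) }

lemma Lfacts_finite : (Lfacts n).Finite := by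
  apply Set.Finite.subset (Set.finite_range (fun p : Bool × Fin n => mkF p.1 p.2 (p.2 + 1)))
  rintro f ⟨c, i, hi, rfl⟩
  exact ⟨(c, ⟨i, hi⟩), rfl⟩

def Linst : Instance Ssch := ⟨Lfacts n, Lfacts_finite n⟩

def pt : Fin 1 → ℕ := fun _ => 0

def Lex : PInst Ssch 1 := (Linst n, pt)

/-- facts of the negative example `D w` (the "relativized dual" of the `w`-labeled path). -/
def Dfacts (w : ℕ → Bool) : Set (DBFact Ssch) :=
  { f | ∃ (c : Bool) (i : ℕ),
      (i + 1 < n ∧ f = mkF c (2 * i) (2 * i + 2)) ∨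
      (i < n ∧ c = !(w i) ∧ f = mkF c (2 * i) (2 * i + 3)) ∨
      (i < n ∧ f = mkF c (2 * i + 1) (2 * i + 3)) ∨
      (i + 1 < n ∧ f = mkF c (2 * i + 1) (2 * i + 2)) }

lemma Dfacts_finite (w : ℕ → Bool) : (Dfacts n w).Finite := by
  apply Set.Finite.subset (Set.finite_range
    (fun p : Bool × Fin n × Bool × Bool =>
      mkF p.1 (2 * p.2.1 + (if p.2.2.1 then 0 else 1))
        (2 * p.2.1 + 2 + (if p.2.2.2 then 0 else 1))))
  rintro f ⟨c, i, (⟨hi, rfl⟩ | ⟨hi, hc, rfl⟩ | ⟨hi, rfl⟩ | ⟨hi, rfl⟩)⟩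
  · exact ⟨(c, ⟨i, by omega⟩, true, true), by simp⟩
  · exact ⟨(c, ⟨i, by omega⟩, true, false), by simp [mkF]⟩
  · exact ⟨(c, ⟨i, by omega⟩, false, false), by simp [mkF]⟩
  · exact ⟨(c, ⟨i, by omega⟩, false, true), by simp [mkF]⟩

def Dinst (w : ℕ → Bool) : Instance Ssch := ⟨Dfacts n w, Dfacts_finite n w⟩

/-- `I` contains a walk labeled `w 0, …, w (n-1)` starting at `a`. -/
def HasWalk (I : Instance Ssch) (w : ℕ → Bool) (a : ℕ) : Prop :=
  ∃ ρ : ℕ → ℕ, ρ 0 = a ∧ ∀ i, i < n → mkF (w i) (ρ i) (ρ (i + 1)) ∈ I.facts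

lemma walk_L (w : ℕ → Bool) : HasWalk n (Linst n) w 0 :=
  ⟨id, rfl, fun i hi => ⟨w i, i, hi, rfl⟩⟩

lemma hom_walk {I J : Instance Ssch} {h : ℕ → ℕ} (hh : IsHom I J h) {w : ℕ → Bool} {a : ℕ}
    (hw : HasWalk n I w a) : HasWalk n J w (h a) := by
  obtain ⟨ρ, h0, hf⟩ := hw
  refine ⟨h ∘ ρ, by simp [h0], fun i hi => ?_⟩
  have := hh _ (hf i hi)
  rwa [mkF_map] at this

lemma no_walk_D (hn : 0 < n) (w : ℕ → Bool) : ¬ HasWalk n (Dinst n w) w 0 := by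
  rintro ⟨ρ, h0, hf⟩
  have key : ∀ i, i < n → ρ i = 2 * i := by
    intro i
    induction i with
    | zero => intro _; simpa using h0
    | succ i ih =>
      intro hsn
      have hi : i < n := by omega
      have hfi := hf i hi
      rw [ih hi] at hfi
      obtain ⟨c, j, (⟨hj, he⟩ | ⟨hj, hc, he⟩ | ⟨hj, he⟩ | ⟨hj, he⟩)⟩ := hfi
      · obtain ⟨hc', hu, hv⟩ := mkF_inj he; omega
      · obtain ⟨hc', hu, hv⟩ := mkF_inj he
        have : i = j := by omega
        subst this
        rw [← hc'] at hc
        simp at hc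
      · obtain ⟨hc', hu, hv⟩ := mkF_inj he; omega
      · obtain ⟨hc', hu, hv⟩ := mkF_inj he; omega
  have hfn := hf (n - 1) (by omega)
  rw [key (n - 1) (by omega)] at hfn
  obtain ⟨c, j, (⟨hj, he⟩ | ⟨hj, hc, he⟩ | ⟨hj, he⟩ | ⟨hj, he⟩)⟩ := hfn
  · obtain ⟨hc', hu, hv⟩ := mkF_inj he; omega
  · obtain ⟨hc', hu, hv⟩ := mkF_inj he
    have : n - 1 = j := by omega
    subst this
    rw [← hc'] at hc
    simp at hc
  · obtain ⟨hc', hu, hv⟩ := mkF_inj he; omega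
  · obtain ⟨hc', hu, hv⟩ := mkF_inj he; omega

lemma walk_D_of_ne (w v : ℕ → Bool) (j : ℕ) (hj : j < n) (hne : v j ≠ w j) :
    HasWalk n (Dinst n w) v 0 := by
  refine ⟨fun i => 2 * i + (if i ≤ j then 0 else 1), by simp, fun i hi => ?_⟩
  rcases lt_trichotomy i j with h | h | h
  · have e1 : (if i ≤ j then 0 else 1) = 0 := by simp [h.le]
    have e2 : (if i + 1 ≤ j then 0 else 1) = 0 := by simp [Nat.succ_le_of_lt h]
    beta_reduce
    rw [e1, e2]
    exact ⟨v i, i, Or.inl ⟨by omega, by rw [show 2*(i+1)+0 = 2*i+2 by ring, show 2*i+0=2*i by ring]⟩⟩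
  · subst h
    have e1 : (if i ≤ i then 0 else 1) = 0 := by simp
    have e2 : (if i + 1 ≤ i then 0 else 1) = 1 := by simp
    beta_reduce
    rw [e1, e2]
    refine ⟨v i, i, Or.inr (Or.inl ⟨hi, ?_, by rw [show 2*(i+1)+1 = 2*i+3 by ring, show 2*i+0=2*i by ring]⟩)⟩
    revert hne; cases v i <;> cases w i <;> simp
  · have hij : ¬ i ≤ j := by omega
    have hij2 : ¬ i + 1 ≤ j := by omega
    have e1 : (if i ≤ j then 0 else 1) = 1 := by simp [hij]
    have e2 : (if i + 1 ≤ j then 0 else 1) = 1 := by simp [hij2]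
    beta_reduce
    rw [e1, e2]
    exact ⟨v i, i, Or.inr (Or.inr (Or.inl ⟨hi, by rw [show 2*(i+1)+1 = 2*i+3 by ring]⟩))⟩

end
end MGAux
namespace MGAux
noncomputable section
open Classical

variable (n : ℕ)

lemma adom_L (hn : 0 < n) : 0 ∈ (Linst n).adom :=
  ⟨mkF true 0 1, ⟨true, 0, hn, rfl⟩, by simp [mkF]⟩

lemma adom_D (hn : 0 < n) (w : ℕ → Bool) : 0 ∈ (Dinst n w).adom := by
  refine ⟨mkF (!(w 0)) 0 3, ⟨!(w 0), 0, Or.inr (Or.inl ⟨hn, rfl, by norm_num⟩)⟩, by simp [mkF]⟩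

/-- Membership in `Lfacts` forces level structure. -/
lemma L_level {c : Bool} {x y : ℕ} (h : mkF c x y ∈ Lfacts n) : x < n ∧ y = x + 1 := by
  obtain ⟨c', i, hi, he⟩ := h
  obtain ⟨_, rfl, rfl⟩ := mkF_inj he
  exact ⟨hi, rfl⟩

/-- The key homomorphism lemma: a pointed instance that maps into the layered instance
and has no `w`-walk from its point maps into `Dinst w`. -/
lemma key_hom (hn : 0 < n) (w : ℕ → Bool) (G : Instance Ssch) (a : ℕ) (ℓ : ℕ → ℕ)
    (hℓ : IsHom G (Linst n) ℓ) (ha : ℓ a = 0) (hw : ¬ HasWalk n G w a) :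
    ∃ h : ℕ → ℕ, IsHom G (Dinst n w) h ∧ h a = 0 := by
  classical
  set Pre : ℕ → Prop := fun v =>
    ∃ ρ : ℕ → ℕ, ρ 0 = a ∧ ρ (ℓ v) = v ∧ ∀ i, i < ℓ v → mkF (w i) (ρ i) (ρ (i + 1)) ∈ G.facts
    with hPre
  have pre_a : Pre a := ⟨fun _ => a, rfl, by rw [ha], fun i hi => by rw [ha] at hi; omega⟩
  have pre_extend : ∀ u v c, Pre u → mkF c u v ∈ G.facts → c = w (ℓ u) → ℓ v = ℓ u + 1 → Pre v := by
    rintro u v c ⟨ρ, hρ0, hρu, hρw⟩ hf hc hv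
    refine ⟨fun j => if j = ℓ u + 1 then v else ρ j, ?_, ?_, ?_⟩
    · simp only [if_neg (by omega : ¬ (0:ℕ) = ℓ u + 1)]; exact hρ0
    · rw [hv]; simp
    · intro i hi
      rw [hv] at hi
      rcases Nat.lt_or_ge i (ℓ u) with h | h
      · have e1 : ¬ i = ℓ u + 1 := by omega
        have e2 : ¬ i + 1 = ℓ u + 1 := by omega
        simp only [if_neg e1, if_neg e2]
        exact hρw i h
      · have hieq : i = ℓ u := by omega
        have e1 : ¬ i = ℓ u + 1 := by omega
        simp only [if_neg e1, if_pos (show i + 1 = ℓ u + 1 by omega)]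
        rw [hieq, hρu, ← hc]
        exact hf
  refine ⟨fun v => if Pre v ∧ ℓ v < n then 2 * ℓ v else 2 * ℓ v + 1, ?_, ?_⟩
  · intro f hf
    obtain ⟨c, u, v, rfl⟩ := exists_mkF f
    have hL := hℓ _ hf
    rw [mkF_map] at hL
    obtain ⟨hun, hv1⟩ := L_level n hL
    rw [mkF_map]
    by_cases hPu : Pre u
    · have hu2 : (if Pre u ∧ ℓ u < n then 2 * ℓ u else 2 * ℓ u + 1) = 2 * ℓ u := by
        simp [hPu, hun]
      rw [hu2]
      by_cases hc : c = w (ℓ u)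
      · have hPv : Pre v := pre_extend u v c hPu hf hc hv1
        have hvn : ℓ v < n := by
          rcases Nat.lt_or_ge (ℓ v) n with h | h
          · exact h
          · exfalso
            have hveq : ℓ v = n := by omega
            obtain ⟨ρ, hρ0, hρv, hρw⟩ := hPv
            exact hw ⟨ρ, hρ0, fun i hi => hρw i (by omega)⟩
        have hv2 : (if Pre v ∧ ℓ v < n then 2 * ℓ v else 2 * ℓ v + 1) = 2 * ℓ v := by
          simp [hPv, hvn]
        rw [hv2, hv1]
        exact ⟨c, ℓ u, Or.inl ⟨by omega, by rw [show 2*(ℓ u + 1) = 2 * ℓ u + 2 by ring]⟩⟩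
      · by_cases hPv : Pre v ∧ ℓ v < n
        · have hv2 : (if Pre v ∧ ℓ v < n then 2 * ℓ v else 2 * ℓ v + 1) = 2 * ℓ v := by
            simp [hPv]
          rw [hv2, hv1]
          exact ⟨c, ℓ u, Or.inl ⟨by omega, by rw [show 2*(ℓ u + 1) = 2 * ℓ u + 2 by ring]⟩⟩
        · have hv2 : (if Pre v ∧ ℓ v < n then 2 * ℓ v else 2 * ℓ v + 1) = 2 * ℓ v + 1 := by
            simp [hPv]
          rw [hv2, hv1]
          refine ⟨c, ℓ u, Or.inr (Or.inl ⟨hun, ?_, by rw [show 2*(ℓ u + 1)+1 = 2 * ℓ u + 3 by ring]⟩)⟩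
          revert hc; cases c <;> cases w (ℓ u) <;> simp
    · have hu2 : (if Pre u ∧ ℓ u < n then 2 * ℓ u else 2 * ℓ u + 1) = 2 * ℓ u + 1 := by
        simp [hPu]
      rw [hu2]
      by_cases hPv : Pre v ∧ ℓ v < n
      · have hv2 : (if Pre v ∧ ℓ v < n then 2 * ℓ v else 2 * ℓ v + 1) = 2 * ℓ v := by
          simp [hPv]
        rw [hv2, hv1]
        exact ⟨c, ℓ u, Or.inr (Or.inr (Or.inr ⟨by omega, by rw [show 2*(ℓ u + 1) = 2 * ℓ u + 2 by ring]⟩))⟩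
      · have hv2 : (if Pre v ∧ ℓ v < n then 2 * ℓ v else 2 * ℓ v + 1) = 2 * ℓ v + 1 := by
          simp [hPv]
        rw [hv2, hv1]
        exact ⟨c, ℓ u, Or.inr (Or.inr (Or.inl ⟨hun, by rw [show 2*(ℓ u + 1)+1 = 2 * ℓ u + 3 by ring]⟩))⟩
  · have hpa : Pre a ∧ ℓ a < n := ⟨pre_a, by rw [ha]; exact hn⟩
    simp only [ha, Nat.mul_zero]
    simp [pre_a, hn]

end
end MGAux
namespace MGAux
noncomputable section
open Classical

variable (n : ℕ)

def qT : CQ Ssch 1 := ⟨Lfacts n, Lfacts_finite n, fun _ => 0⟩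

lemma qT_pos (hn : 0 < n) : pt ∈ (qT n).eval (Linst n) :=
  ⟨fun _ => adom_L n hn, id, fun f hf => by rw [show f.map id = f from map_id f]; exact hf,
   fun _ => rfl⟩

lemma qT_neg (hn : 0 < n) (w : ℕ → Bool) : pt ∉ (qT n).eval (Dinst n w) := by
  rintro ⟨-, h, hmap, hans⟩
  have hhom : IsHom (Linst n) (Dinst n w) h := hmap
  have := hom_walk n hhom (walk_L n w)
  rw [show h 0 = 0 from hans 0] at this
  exact no_walk_D n hn w this

/-- hom between canonical instances implies containment (the easy direction). -/
lemma contained_of_hom {S : Schema} {k : ℕ} (q q' : CQ S k) (H : ℕ → ℕ)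
    (hat : ∀ f ∈ q.atoms, f.map H ∈ q'.atoms) (hans : ∀ i, H (q.ans i) = q'.ans i) :
    q'.contained q := by
  rintro I a ⟨hadom, h', hmap', hans'⟩
  refine ⟨hadom, h' ∘ H, fun f hf => ?_, fun i => ?_⟩
  · have h1 := hmap' _ (hat f hf)
    have : (f.map H).map h' = f.map (h' ∘ H) := by
      cases f with
      | mk r ar he => simp [DBFact.map]
    rwa [this] at h1
  · show h' (H (q.ans i)) = a i
    rw [hans i, hans' i]

def ext (W : Fin n → Bool) : ℕ → Bool := fun i => if h : i < n then W ⟨i, h⟩ else false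

lemma ext_val (W : Fin n → Bool) (j : Fin n) : ext n W j.val = W j := by
  simp [ext, j.isLt]

def phi : Option (Fin n → Bool) → PInst Ssch 1 := fun o =>
  match o with
  | none => Lex n
  | some W => (Dinst n (ext n W), pt)

lemma L_fact_not_D (hn : 0 < n) (w : ℕ → Bool) : mkF true 0 1 ∉ Dfacts n w := by
  rintro ⟨c, i, (⟨hi, he⟩ | ⟨hi, hc, he⟩ | ⟨hi, he⟩ | ⟨hi, he⟩)⟩ <;>
    · obtain ⟨hc', hu, hv⟩ := mkF_inj he; omega

lemma D_det {w w' : ℕ → Bool} (h : Dfacts n w = Dfacts n w') {j : ℕ} (hj : j < n) :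
    w j = w' j := by
  have hm : mkF (!(w j)) (2 * j) (2 * j + 3) ∈ Dfacts n w :=
    ⟨!(w j), j, Or.inr (Or.inl ⟨hj, rfl, rfl⟩)⟩
  rw [h] at hm
  obtain ⟨c, i, (⟨hi, he⟩ | ⟨hi, hc, he⟩ | ⟨hi, he⟩ | ⟨hi, he⟩)⟩ := hm
  · obtain ⟨hc', hu, hv⟩ := mkF_inj he; omega
  · obtain ⟨hc', hu, hv⟩ := mkF_inj he
    have : i = j := by omega
    subst this
    rw [← hc'] at hc
    revert hc; cases w i <;> cases w' i <;> simp
  · obtain ⟨hc', hu, hv⟩ := mkF_inj he; omega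
  · obtain ⟨hc', hu, hv⟩ := mkF_inj he; omega

lemma phi_inj (hn : 0 < n) : Function.Injective (phi n) := by
  intro o o' h
  match o, o' with
  | none, none => rfl
  | none, some W =>
    exfalso
    have : (Linst n).facts = (Dinst n (ext n W)).facts :=
      congrArg (fun e : PInst Ssch 1 => e.1.facts) h
    have hmem : mkF true 0 1 ∈ (Linst n).facts := ⟨true, 0, hn, rfl⟩
    rw [this] at hmem
    exact L_fact_not_D n hn _ hmem
  | some W, none =>
    exfalso
    have : (Dinst n (ext n W)).facts = (Linst n).facts :=
      congrArg (fun e : PInst Ssch 1 => e.1.facts) h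
    have hmem : mkF true 0 1 ∈ (Linst n).facts := ⟨true, 0, hn, rfl⟩
    rw [← this] at hmem
    exact L_fact_not_D n hn _ hmem
  | some W, some W' =>
    have hfe : Dfacts n (ext n W) = Dfacts n (ext n W') :=
      congrArg (fun e : PInst Ssch 1 => e.1.facts) h
    have : W = W' := by
      funext j
      have := D_det n hfe j.isLt
      rwa [ext_val, ext_val] at this
    rw [this]

lemma ext_ne {W W' : Fin n → Bool} (h : W ≠ W') : ∃ j, j < n ∧ ext n W j ≠ ext n W' j := by
  by_contra hcon
  push_neg at hcon
  apply h
  funext j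
  have := hcon j.val j.isLt
  rwa [ext_val, ext_val] at this

lemma hom_D_L (w : ℕ → Bool) : IsHom (Dinst n w) (Linst n) (fun z => z / 2) := by
  intro f hf
  obtain ⟨c, i, (⟨hi, rfl⟩ | ⟨hi, hc, rfl⟩ | ⟨hi, rfl⟩ | ⟨hi, rfl⟩)⟩ := hf <;>
  · rw [mkF_map]
    refine ⟨c, i, by omega, ?_⟩
    congr 1 <;> omega

/-- canonical CQ of `D w'` is true on `(L,0)`. -/
lemma canonD_true_L (hn : 0 < n) (W : Fin n → Bool) :
    pt ∈ (canonCQ (phi n (some W))).eval (Linst n) := by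
  refine ⟨fun _ => adom_L n hn, fun z => z / 2, hom_D_L n _, fun i => by show pt i / 2 = pt i; simp [pt]⟩

lemma canonD_true_self (hn : 0 < n) (W : Fin n → Bool) :
    pt ∈ (canonCQ (phi n (some W))).eval (Dinst n (ext n W)) :=
  ⟨fun _ => adom_D n hn _, id, fun f hf => by rw [show f.map id = f from map_id f]; exact hf,
   fun _ => rfl⟩

lemma canonD_false_D (hn : 0 < n) {W W' : Fin n → Bool} (hne : W ≠ W') :
    pt ∉ (canonCQ (phi n (some W'))).eval (Dinst n (ext n W)) := by
  rintro ⟨-, h, hmap, hans⟩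
  obtain ⟨j, hj, hjne⟩ := ext_ne n hne
  have hwalk : HasWalk n (Dinst n (ext n W')) (ext n W) 0 :=
    walk_D_of_ne n (ext n W') (ext n W) j hj hjne
  have hhom : IsHom (Dinst n (ext n W')) (Dinst n (ext n W)) h := hmap
  have := hom_walk n hhom hwalk
  rw [show h 0 = 0 from hans 0] at this
  exact no_walk_D n hn _ this

end
end MGAux
namespace MGAux
noncomputable section
open Classical

variable (n : ℕ)

def codeW (W : Fin n → Bool) : ℕ := @Encodable.encode _ (Fintype.toEncodable _) W

lemma decode_codeW (W : Fin n → Bool) :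
    @Encodable.decode (Fin n → Bool) (Fintype.toEncodable _) (codeW n W) = some W :=
  @Encodable.encodek _ (Fintype.toEncodable _) W

def var (W : Fin n → Bool) (i : ℕ) : ℕ := if i = 0 then 0 else Nat.pair (codeW n W) i

lemma var_zero (W : Fin n → Bool) : var n W 0 = 0 := rfl

def qVatoms (V : Set (Fin n → Bool)) : Set (DBFact Ssch) :=
  { f | ∃ W ∈ V, ∃ i, i < n ∧ f = mkF (ext n W i) (var n W i) (var n W (i + 1)) }

lemma qVatoms_finite (V : Set (Fin n → Bool)) : (qVatoms n V).Finite := by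
  apply Set.Finite.subset (Set.finite_range
    (fun p : (Fin n → Bool) × Fin n =>
      mkF (ext n p.1 p.2) (var n p.1 p.2) (var n p.1 (p.2 + 1))))
  rintro f ⟨W, hW, i, hi, rfl⟩
  exact ⟨(W, ⟨i, hi⟩), rfl⟩

def qV (V : Set (Fin n → Bool)) : CQ Ssch 1 := ⟨qVatoms n V, qVatoms_finite n V, fun _ => 0⟩

def H0 : ℕ → ℕ := fun z => if z = 0 then 0 else z.unpair.2

lemma H0_var (W : Fin n → Bool) (i : ℕ) : H0 (var n W i) = i := by
  by_cases hi : i = 0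
  · subst hi; simp [H0, var]
  · have hne : Nat.pair (codeW n W) i ≠ 0 := by
      have := Nat.right_le_pair (codeW n W) i
      omega
    simp [H0, var, hi, hne]

lemma qV_true_L (hn : 0 < n) (V : Set (Fin n → Bool)) : pt ∈ (qV n V).eval (Linst n) := by
  refine ⟨fun _ => adom_L n hn, H0, ?_, fun _ => rfl⟩
  rintro f ⟨W, hW, i, hi, rfl⟩
  rw [mkF_map, H0_var, H0_var]
  exact ⟨ext n W i, i, hi, rfl⟩

lemma qV_false_D (hn : 0 < n) (V : Set (Fin n → Bool)) {W : Fin n → Bool} (hW : W ∈ V) :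
    pt ∉ (qV n V).eval (Dinst n (ext n W)) := by
  rintro ⟨-, h, hmap, hans⟩
  apply no_walk_D n hn (ext n W)
  refine ⟨fun i => h (var n W i), by show h (var n W 0) = 0; rw [var_zero]; exact hans 0, fun i hi => ?_⟩
  have := hmap _ ⟨W, hW, i, hi, rfl⟩
  rwa [mkF_map] at this

lemma qV_smg (hn : 0 < n) {N : ℕ} (s : Fin N → PInst Ssch 1)
    (hLex : ∃ i, s i = Lex n) (hs : ∀ i, ∃ o, s i = phi n o) :
    IsStronglyMostGeneralFit (qV n {W | ∃ i, s i = phi n (some W)})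
      (labeledOf (qT n) s) := by
  set V : Set (Fin n → Bool) := {W | ∃ i, s i = phi n (some W)} with hV
  set E := labeledOf (qT n) s with hE
  have hposeq : ∀ e ∈ E.pos, e = Lex n := by
    rintro e ⟨⟨i, rfl⟩, hpos⟩
    obtain ⟨o, ho⟩ := hs i
    rw [ho]
    match o with
    | none => rfl
    | some W =>
      exfalso
      rw [ho] at hpos
      exact qT_neg n hn (ext n W) hpos
  have hnegmem : ∀ e ∈ E.neg, ∃ W ∈ V, e = phi n (some W) := by
    rintro e ⟨⟨i, rfl⟩, hneg⟩
    obtain ⟨o, ho⟩ := hs i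
    match o with
    | none =>
      exfalso
      rw [ho] at hneg
      exact hneg (qT_pos n hn)
    | some W => exact ⟨W, ⟨i, ho⟩, ho⟩
  constructor
  · constructor
    · intro e he
      rw [hposeq e he]
      exact qV_true_L n hn V
    · intro e he
      obtain ⟨W, hW, rfl⟩ := hnegmem e he
      exact qV_false_D n hn V hW
  · intro q' hq'
    have hLpos : Lex n ∈ E.pos := ⟨hLex, qT_pos n hn⟩
    obtain ⟨-, ℓ, hℓmap, hℓans⟩ := hq'.1 _ hLpos
    set G' : Instance Ssch := ⟨q'.atoms, q'.finite⟩ with hG'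
    have hwalks : ∀ W : Fin n → Bool, ∃ ρ : ℕ → ℕ, W ∈ V →
        (ρ 0 = q'.ans 0 ∧ ∀ i, i < n → mkF (ext n W i) (ρ i) (ρ (i + 1)) ∈ q'.atoms) := by
      intro W
      by_cases hW : W ∈ V
      · have hWneg : phi n (some W) ∈ E.neg := ⟨hW, qT_neg n hn (ext n W)⟩
        have hnot := hq'.2 _ hWneg
        rcases Classical.em (HasWalk n G' (ext n W) (q'.ans 0)) with hwk | hwk
        · obtain ⟨ρ, h0, hρ⟩ := hwk
          exact ⟨ρ, fun _ => ⟨h0, hρ⟩⟩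
        · exfalso
          obtain ⟨h, hhom, h0⟩ :=
            key_hom n hn (ext n W) G' (q'.ans 0) ℓ hℓmap (hℓans 0) hwk
          refine hnot ⟨fun _ => adom_D n hn _, h, hhom, fun i => ?_⟩
          have : i = 0 := Subsingleton.elim i 0
          rw [this]
          exact h0
      · exact ⟨fun _ => 0, fun h => absurd h hW⟩
    choose ρh hρh using hwalks
    set H : ℕ → ℕ := fun z =>
      if z = 0 then q'.ans 0 else
        (match @Encodable.decode (Fin n → Bool) (Fintype.toEncodable _) z.unpair.1 with
          | some W => ρh W z.unpair.2
          | none => 0) with hH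
    have hHvar : ∀ W ∈ V, ∀ i, H (var n W i) = ρh W i := by
      intro W hW i
      by_cases hi : i = 0
      · subst hi
        rw [var_zero]
        show (if (0:ℕ) = 0 then q'.ans 0 else _) = _
        rw [if_pos rfl, (hρh W hW).1]
      · have hne : Nat.pair (codeW n W) i ≠ 0 := by
          have := Nat.right_le_pair (codeW n W) i
          omega
        show H (if i = 0 then 0 else Nat.pair (codeW n W) i) = _
        rw [if_neg hi, hH]
        simp only [hne, if_false, Nat.unpair_pair, decode_codeW n W]
    apply contained_of_hom (qV n V) q' H
    · rintro f ⟨W, hW, i, hi, rfl⟩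
      rw [mkF_map, hHvar W hW i, hHvar W hW (i + 1)]
      exact (hρh W hW).2 i hi
    · intro i
      have : i = 0 := Subsingleton.elim i 0
      rw [this]
      show H 0 = q'.ans 0
      rw [hH]
      simp

end
end MGAux
namespace MGAux
noncomputable section
open Classical
open scoped ENNReal

variable (n : ℕ)

lemma Lfacts_ncard : (Lfacts n).ncard ≤ 8 * n := by
  have h1 : Lfacts n ⊆ Set.range (fun p : Bool × Fin n => mkF p.1 p.2 (p.2 + 1)) := by
    rintro f ⟨c, i, hi, rfl⟩; exact ⟨(c, ⟨i, hi⟩), rfl⟩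
  calc (Lfacts n).ncard ≤ (Set.range (fun p : Bool × Fin n => mkF p.1 p.2 (p.2 + 1))).ncard :=
        Set.ncard_le_ncard h1 (Set.finite_range _)
    _ = ((fun p : Bool × Fin n => mkF p.1 p.2 (p.2 + 1)) '' Set.univ).ncard := by
        rw [Set.image_univ]
    _ ≤ (Set.univ : Set (Bool × Fin n)).ncard := Set.ncard_image_le Set.finite_univ
    _ = Fintype.card (Bool × Fin n) := by rw [Set.ncard_univ, Nat.card_eq_fintype_card]
    _ ≤ 8 * n := by simp [Fintype.card_prod]; omega

lemma Dfacts_ncard (w : ℕ → Bool) : (Dfacts n w).ncard ≤ 8 * n := by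
  set g := (fun p : Bool × Fin n × Bool × Bool =>
      mkF p.1 (2 * p.2.1 + (if p.2.2.1 then 0 else 1))
        (2 * p.2.1 + 2 + (if p.2.2.2 then 0 else 1))) with hg
  have h1 : Dfacts n w ⊆ Set.range g := by
    rintro f ⟨c, i, (⟨hi, rfl⟩ | ⟨hi, hc, rfl⟩ | ⟨hi, rfl⟩ | ⟨hi, rfl⟩)⟩
    · exact ⟨(c, ⟨i, by omega⟩, true, true), by simp [hg]⟩
    · exact ⟨(c, ⟨i, by omega⟩, true, false), by simp [hg, mkF]⟩
    · exact ⟨(c, ⟨i, by omega⟩, false, false), by simp [hg, mkF]⟩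
    · exact ⟨(c, ⟨i, by omega⟩, false, true), by simp [hg, mkF]⟩
  calc (Dfacts n w).ncard ≤ (Set.range g).ncard := Set.ncard_le_ncard h1 (Set.finite_range _)
    _ = (g '' Set.univ).ncard := by rw [Set.image_univ]
    _ ≤ (Set.univ : Set (Bool × Fin n × Bool × Bool)).ncard := Set.ncard_image_le Set.finite_univ
    _ = Fintype.card (Bool × Fin n × Bool × Bool) := by
        rw [Set.ncard_univ, Nat.card_eq_fintype_card]
    _ ≤ 8 * n := by simp [Fintype.card_prod]; omega

def Qpm : PMF (Option (Fin n → Bool)) :=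
  PMF.ofFintype (fun o => match o with | none => 2⁻¹ | some _ => (2 ^ (n + 1))⁻¹) (by
    rw [Fintype.sum_option]
    have hcard : Fintype.card (Fin n → Bool) = 2 ^ n := by
      simp [Fintype.card_fun]
    have hsum : ∑ _a : Fin n → Bool, ((2:ℝ≥0∞) ^ (n + 1))⁻¹
        = (2 ^ n : ℕ) * ((2:ℝ≥0∞) ^ (n + 1))⁻¹ := by
      rw [Finset.sum_const, Finset.card_univ, hcard, nsmul_eq_mul]
    show 2⁻¹ + ∑ _a : Fin n → Bool, ((2:ℝ≥0∞) ^ (n + 1))⁻¹ = 1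
    rw [hsum]
    have hc : ((2 ^ n : ℕ) : ℝ≥0∞) = (2:ℝ≥0∞) ^ n := by push_cast; ring
    have h2 : ((2:ℝ≥0∞) ^ (n + 1))⁻¹ = ((2:ℝ≥0∞) ^ n)⁻¹ * 2⁻¹ := by
      rw [pow_succ]
      exact ENNReal.mul_inv (Or.inl (by positivity)) (Or.inl (ENNReal.pow_ne_top ENNReal.ofNat_ne_top))
    rw [hc, h2, ← mul_assoc, ENNReal.mul_inv_cancel (by positivity) (ENNReal.pow_ne_top ENNReal.ofNat_ne_top),
      one_mul, ENNReal.inv_two_add_inv_two])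

def Pd : PMF (PInst Ssch 1) := (Qpm n).map (phi n)

lemma Pd_apply (hn : 0 < n) (o : Option (Fin n → Bool)) :
    Pd n (phi n o) = (Qpm n) o := by
  rw [Pd, PMF.map_apply]
  rw [tsum_eq_single o]
  · rw [if_pos rfl]
  · intro o' ho'
    rw [if_neg]
    intro hcon
    exact ho' (phi_inj n hn hcon.symm)

lemma Pd_none (hn : 0 < n) : Pd n (Lex n) = 2⁻¹ := by
  have := Pd_apply n hn none
  rw [show phi n none = Lex n from rfl] at this
  rw [this]
  rfl

lemma Pd_some (hn : 0 < n) (W : Fin n → Bool) :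
    Pd n (phi n (some W)) = ((2:ℝ≥0∞) ^ (n + 1))⁻¹ := by
  rw [Pd_apply n hn (some W)]
  rfl

lemma Pd_supp (e : PInst Ssch 1) (he : e ∈ (Pd n).support) : ∃ o, e = phi n o := by
  rw [Pd, PMF.support_map] at he
  obtain ⟨o, -, rfl⟩ := he
  exact ⟨o, rfl⟩

end
end MGAux
namespace MGAux
noncomputable section
open Classical
open scoped ENNReal

variable (n : ℕ)

lemma bad_sample (hn : 0 < n) (A : CQAlgorithm)
    (hmg : ∀ (S : Schema) (k : ℕ) (E : LabeledExamples S k),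
      (∃ q : CQ S k, IsStronglyMostGeneralFit q E) →
      IsStronglyMostGeneralFit (A S k E) E)
    {N : ℕ} (hN : N < 2 ^ (n - 1)) (s : Fin N → PInst Ssch 1)
    (hs : ∀ i, ∃ o, s i = phi n o) (hLex : ∃ i, s i = Lex n) :
    (4 : ℝ≥0∞)⁻¹ < cqError (Pd n) (qT n) (A Ssch 1 (labeledOf (qT n) s)) := by
  classical
  set E := labeledOf (qT n) s with hE
  set qh := A Ssch 1 E with hqh
  have hsmg : IsStronglyMostGeneralFit qh E :=
    hmg Ssch 1 E ⟨_, qV_smg n hn s hLex hs⟩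
  set V : Set (Fin n → Bool) := {W | ∃ i, s i = phi n (some W)} with hV
  -- facts about E
  have hposeq : ∀ e ∈ E.pos, e = Lex n := by
    rintro e ⟨⟨i, rfl⟩, hpos⟩
    obtain ⟨o, ho⟩ := hs i
    rw [ho]
    match o with
    | none => rfl
    | some W =>
      exfalso
      rw [ho] at hpos
      exact qT_neg n hn (ext n W) hpos
  have hnegmem : ∀ e ∈ E.neg, ∃ W ∈ V, e = phi n (some W) := by
    rintro e ⟨⟨i, rfl⟩, hneg⟩
    obtain ⟨o, ho⟩ := hs i
    match o with
    | none =>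
      exfalso
      rw [ho] at hneg
      exact hneg (qT_pos n hn)
    | some W => exact ⟨W, ⟨i, ho⟩, ho⟩
  -- the output is true on every unsampled negative example
  have hkey : ∀ W : Fin n → Bool, W ∉ V → pt ∈ qh.eval (Dinst n (ext n W)) := by
    intro W hW
    have hfits : (canonCQ (phi n (some W))).fits E := by
      constructor
      · intro e he
        rw [hposeq e he]
        exact canonD_true_L n hn W
      · intro e he
        obtain ⟨W', hW', rfl⟩ := hnegmem e he
        have hne : W' ≠ W := fun h => hW (h ▸ hW')
        exact canonD_false_D n hn hne
    have hcont := hsmg.2 _ hfits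
    exact hcont (Dinst n (ext n W)) (canonD_true_self n hn W)
  -- the finite set of unsampled negative examples
  have hNpos : 0 < N := by
    obtain ⟨i, -⟩ := hLex
    exact i.pos
  set Vfin : Finset (Fin n → Bool) :=
    Finset.univ.filter (fun W => ∃ i, s i = phi n (some W)) with hVfin
  have hVcard : Vfin.card ≤ N := by
    have := Finset.card_le_card_of_injOn
      (f := fun W => if h : ∃ i, s i = phi n (some W) then Classical.choose h else ⟨0, hNpos⟩)
      (s := Vfin) (t := Finset.univ)
      (fun a _ => Finset.mem_univ _)
      ?_
    · simpa using this
    · intro W hW W' hW' heq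
      have hWm : ∃ i, s i = phi n (some W) := by
        have := Finset.mem_filter.mp hW; exact this.2
      have hWm' : ∃ i, s i = phi n (some W') := by
        have := Finset.mem_filter.mp hW'; exact this.2
      beta_reduce at heq
      rw [dif_pos hWm, dif_pos hWm'] at heq
      have h1 := Classical.choose_spec hWm
      have h2 := Classical.choose_spec hWm'
      rw [heq] at h1
      rw [h1] at h2
      have := phi_inj n hn h2
      exact (Option.some.injEq _ _ ▸ this)
  set Ffin : Finset (PInst Ssch 1) :=
    (Finset.univ \ Vfin).image (fun W => phi n (some W)) with hFfin
  have hFcard : Ffin.card = 2 ^ n - Vfin.card := by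
    have hinj : Function.Injective (fun W : Fin n → Bool => phi n (some W)) :=
      fun a b hab => Option.some_injective _ (phi_inj n hn hab)
    rw [hFfin, Finset.card_image_of_injective _ hinj,
      Finset.card_sdiff_of_subset (Finset.subset_univ _), Finset.card_univ]
    congr 1
    simp [Fintype.card_fun]
  set badSet : Set (PInst Ssch 1) :=
    {e | e.2 ∈ symmDiff (qh.eval e.1) ((qT n).eval e.1)} with hbadSet
  have hterm : ∀ e ∈ Ffin, Set.indicator badSet (fun e => Pd n e) e = ((2:ℝ≥0∞) ^ (n + 1))⁻¹ := by
    intro e he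
    rw [hFfin] at he
    obtain ⟨W, hWm, rfl⟩ := Finset.mem_image.mp he
    have hWnot : W ∉ V := by
      have := (Finset.mem_sdiff.mp hWm).2
      intro hcon
      exact this (Finset.mem_filter.mpr ⟨Finset.mem_univ _, hcon⟩)
    have hmem : phi n (some W) ∈ badSet := by
      rw [hbadSet]
      show pt ∈ symmDiff (qh.eval (Dinst n (ext n W))) ((qT n).eval (Dinst n (ext n W)))
      rw [Set.mem_symmDiff]
      exact Or.inl ⟨hkey W hWnot, qT_neg n hn (ext n W)⟩
    rw [Set.indicator_of_mem hmem, Pd_some n hn W]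
  have hsumeq : ∑ e ∈ Ffin, Set.indicator badSet (fun e => Pd n e) e
      = (Ffin.card : ℝ≥0∞) * ((2:ℝ≥0∞) ^ (n + 1))⁻¹ := by
    rw [Finset.sum_congr rfl hterm, Finset.sum_const, nsmul_eq_mul]
  have hle : ∑ e ∈ Ffin, Set.indicator badSet (fun e => Pd n e) e
      ≤ cqError (Pd n) (qT n) qh := ENNReal.sum_le_tsum Ffin
  have hcard_lt : 2 ^ (n - 1) < Ffin.card := by
    have h2n : 2 ^ n = 2 ^ (n - 1) + 2 ^ (n - 1) := by
      obtain ⟨m, rfl⟩ : ∃ m, n = m + 1 := ⟨n - 1, by omega⟩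
      simp only [Nat.add_sub_cancel, pow_succ]
      omega
    omega
  have hstrict : (4 : ℝ≥0∞)⁻¹ < (Ffin.card : ℝ≥0∞) * ((2:ℝ≥0∞) ^ (n + 1))⁻¹ := by
    have e1 : (2:ℝ≥0∞) ^ (n + 1) = (2:ℝ≥0∞) ^ (n - 1) * 4 := by
      have : n + 1 = (n - 1) + 2 := by omega
      rw [this, pow_add]
      norm_num
    have e2 : (4 : ℝ≥0∞)⁻¹ = (2:ℝ≥0∞) ^ (n - 1) * ((2:ℝ≥0∞) ^ (n + 1))⁻¹ := by
      rw [e1, ENNReal.mul_inv (Or.inl (by positivity))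
        (Or.inl (ENNReal.pow_ne_top ENNReal.ofNat_ne_top)), ← mul_assoc,
        ENNReal.mul_inv_cancel (by positivity) (ENNReal.pow_ne_top ENNReal.ofNat_ne_top), one_mul]
    rw [e2]
    apply ENNReal.mul_lt_mul_left (a := ((2:ℝ≥0∞) ^ (n + 1))⁻¹) (by simp) (by simp [ENNReal.pow_ne_top ENNReal.ofNat_ne_top])
    have : ((2 ^ (n - 1) : ℕ) : ℝ≥0∞) < (Ffin.card : ℝ≥0∞) := by
      exact_mod_cast Nat.cast_lt.mpr hcard_lt
    calc (2:ℝ≥0∞) ^ (n - 1) = ((2 ^ (n - 1) : ℕ) : ℝ≥0∞) := by push_cast; ring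
      _ < (Ffin.card : ℝ≥0∞) := this
  calc (4 : ℝ≥0∞)⁻¹ < (Ffin.card : ℝ≥0∞) * ((2:ℝ≥0∞) ^ (n + 1))⁻¹ := hstrict
    _ = ∑ e ∈ Ffin, Set.indicator badSet (fun e => Pd n e) e := hsumeq.symm
    _ ≤ cqError (Pd n) (qT n) qh := hle

end
end MGAux
namespace MGAux
noncomputable section
open Classical
open scoped ENNReal

def fcons {α : Type} {M : ℕ} (x : α) (t : Fin M → α) : Fin (M+1) → α :=
  Fin.cons (α := fun _ => α) x t

def consE {α : Type} (M : ℕ) : α × (Fin M → α) ≃ (Fin (M+1) → α) where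
  toFun p := fcons p.1 p.2
  invFun t := (t 0, Fin.tail t)
  left_inv p := by
    obtain ⟨x, t⟩ := p
    simp [fcons, Fin.tail_cons]
  right_inv t := Fin.cons_self_tail t

lemma prod_cons_pmf {α : Type} (P : PMF α) {M : ℕ} (x : α) (t : Fin M → α) :
    (∏ i, P (fcons x t i)) = P x * ∏ i, P (t i) := by
  have h : (fun a => (P a : ENNReal)) ∘ fcons x t = fcons (P x) (fun i => P (t i)) :=
    Fin.comp_cons (fun a => (P a : ENNReal)) x t
  calc (∏ i, P (fcons x t i)) = ∏ i, ((fun a => (P a : ENNReal)) ∘ fcons x t) i := rfl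
    _ = ∏ i, fcons (P x) (fun i => P (t i)) i := by rw [h]
    _ = P x * ∏ i, P (t i) := Fin.prod_cons _ _

lemma tsum_pi_prod {α : Type} (P : PMF α) : ∀ M : ℕ, ∑' t : Fin M → α, ∏ i, P (t i) = 1 := by
  intro M
  induction M with
  | zero =>
    rw [tsum_eq_single (default : Fin 0 → α) (fun b hb => absurd (Subsingleton.elim b default) hb)]
    simp
  | succ M ih =>
    rw [← Equiv.tsum_eq (consE M) (fun t => ∏ i, P (t i))]
    calc ∑' p : α × (Fin M → α), (∏ i, P ((consE M) p i))
        = ∑' p : α × (Fin M → α), P p.1 * ∏ i, P (p.2 i) :=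
          tsum_congr fun ⟨x, t⟩ => prod_cons_pmf P x t
      _ = ∑' (x : α) (t : Fin M → α), P x * ∏ i, P (t i) :=
          ENNReal.tsum_prod (f := fun (x : α) (t : Fin M → α) => P x * ∏ i, P (t i))
      _ = ∑' (x : α), P x * ∑' (t : Fin M → α), ∏ i, P (t i) :=
          tsum_congr fun x => ENNReal.tsum_mul_left
      _ = ∑' (x : α), P x := by rw [ih]; simp
      _ = 1 := PMF.tsum_coe P

lemma iid_le_half {α : Type} (P : PMF α) (x₀ : α) (hx : P x₀ = 2⁻¹)
    {N : ℕ} (hN : 0 < N) (T : Set (Fin N → α))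
    (hT : ∀ s ∈ T, (∃ i, s i = x₀) → ∏ i, P (s i) = 0) :
    iidProb P N T ≤ 2⁻¹ := by
  obtain ⟨M, rfl⟩ : ∃ M, N = M + 1 := ⟨N - 1, by omega⟩
  have step1 : iidProb P (M+1) T ≤ iidProb P (M+1) {t | t 0 ≠ x₀} := by
    apply ENNReal.tsum_le_tsum
    intro t
    by_cases ht : t ∈ T
    · by_cases h0 : t 0 = x₀
      · rw [Set.indicator_of_mem ht, hT t ht ⟨0, h0⟩]
        exact zero_le
      · rw [Set.indicator_of_mem ht,
          Set.indicator_of_mem (show t ∈ {t : Fin (M+1) → α | t 0 ≠ x₀} from h0)]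
    · rw [Set.indicator_of_notMem ht]
      exact zero_le
  have step2 : iidProb P (M+1) {t | t 0 ≠ x₀} = 2⁻¹ := by
    rw [iidProb, ← Equiv.tsum_eq (consE M)]
    have hterm : ∀ p : α × (Fin M → α),
        Set.indicator {t : Fin (M+1) → α | t 0 ≠ x₀} (fun t => ∏ i, P (t i)) ((consE M) p)
          = (if p.1 = x₀ then 0 else P p.1) * ∏ i, P (p.2 i) := by
      rintro ⟨x, t⟩
      have hc : (consE M) (x, t) = fcons x t := rfl
      by_cases h0 : x = x₀
      · have hni : fcons x t ∉ {t : Fin (M+1) → α | t 0 ≠ x₀} := by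
          simp [fcons, Fin.cons_zero, h0]
        rw [hc, Set.indicator_of_notMem hni, if_pos h0, zero_mul]
      · have hmi : fcons x t ∈ {t : Fin (M+1) → α | t 0 ≠ x₀} := by
          simp [fcons, Fin.cons_zero, h0]
        rw [hc, Set.indicator_of_mem hmi, if_neg h0]
        exact prod_cons_pmf P x t
    calc ∑' p : α × (Fin M → α), Set.indicator {t : Fin (M+1) → α | t 0 ≠ x₀}
            (fun t => ∏ i, P (t i)) ((consE M) p)
        = ∑' p : α × (Fin M → α), (if p.1 = x₀ then 0 else P p.1) * ∏ i, P (p.2 i) :=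
          tsum_congr hterm
      _ = ∑' (x : α) (t : Fin M → α), (if x = x₀ then 0 else P x) * ∏ i, P (t i) :=
          ENNReal.tsum_prod (f := fun (x : α) (t : Fin M → α) => (if x = x₀ then 0 else P x) * ∏ i, P (t i))
      _ = ∑' (x : α), (if x = x₀ then 0 else P x) := by
          refine tsum_congr fun x => ?_
          rw [ENNReal.tsum_mul_left, tsum_pi_prod P M, mul_one]
      _ = 2⁻¹ := by
          have h1 := ENNReal.tsum_eq_add_tsum_ite (f := fun a => P a) x₀
          rw [PMF.tsum_coe P, hx] at h1
          have h2 : (1 : ℝ≥0∞) = 2⁻¹ + 2⁻¹ := ENNReal.inv_two_add_inv_two.symm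
          rw [h2] at h1
          have h3 := ((ENNReal.add_right_inj (by simp)).mp h1).symm
          calc ∑' (x : α), (if x = x₀ then 0 else P x)
              = ∑' (x : α), (if x = x₀ then 0 else (fun a => P a) x) := rfl
            _ = 2⁻¹ := h3
  calc iidProb P (M+1) T ≤ iidProb P (M+1) {t | t 0 ≠ x₀} := step1
    _ = 2⁻¹ := step2

end
end MGAux
namespace MGAux
noncomputable section
open Classical
open scoped ENNReal

lemma size_Ssch : Ssch.size = 6 := by
  show (∑ R : Ssch.Rel, (Ssch.arity R + 1)) = 6
  show (∑ _R : Bool, (2 + 1)) = 6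
  simp

lemma ofReal_quarter : ENNReal.ofReal (1/4 : ℝ) = (4 : ℝ≥0∞)⁻¹ := by
  rw [one_div, ENNReal.ofReal_inv_of_pos (by norm_num), ENNReal.ofReal_ofNat]

lemma ofReal_half : ENNReal.ofReal (2⁻¹ : ℝ) = (2 : ℝ≥0∞)⁻¹ := by
  rw [ENNReal.ofReal_inv_of_pos (by norm_num), ENNReal.ofReal_ofNat]

lemma poly_lt_exp (q : Polynomial ℝ) :
    ∃ n : ℕ, 2 ≤ n ∧ q.eval (n : ℝ) < 2 ^ (n - 1) := by
  set r := q.comp (Polynomial.C (1 / Real.log 2) * Polynomial.X + Polynomial.C 1) with hr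
  have htend := Polynomial.tendsto_div_exp_atTop r
  have hev : ∀ᶠ x in Filter.atTop, Polynomial.eval x r / Real.exp x < 1 :=
    htend.eventually_lt_const one_pos
  obtain ⟨x₀, hx₀⟩ := Filter.eventually_atTop.mp hev
  have hlog : (0:ℝ) < Real.log 2 := Real.log_pos one_lt_two
  set k := max 1 (Nat.ceil (x₀ / Real.log 2)) with hk
  have hy : x₀ ≤ (k:ℝ) * Real.log 2 := by
    have h1 : x₀ / Real.log 2 ≤ (k : ℝ) := by
      refine le_trans (Nat.le_ceil _) ?_
      exact_mod_cast le_max_right 1 (Nat.ceil (x₀ / Real.log 2))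
    calc x₀ = (x₀ / Real.log 2) * Real.log 2 := by field_simp
      _ ≤ (k:ℝ) * Real.log 2 := mul_le_mul_of_nonneg_right h1 hlog.le
  have hrx := hx₀ _ hy
  have heval : Polynomial.eval ((k:ℝ) * Real.log 2) r = Polynomial.eval ((k:ℝ) + 1) q := by
    rw [hr, Polynomial.eval_comp]
    congr 1
    simp only [Polynomial.eval_add, Polynomial.eval_mul, Polynomial.eval_C, Polynomial.eval_X]
    field_simp
  have hexp : Real.exp ((k:ℝ) * Real.log 2) = 2 ^ k := by
    rw [Real.exp_nat_mul, Real.exp_log (by norm_num : (0:ℝ) < 2)]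
  have hlt : Polynomial.eval ((k:ℝ) + 1) q < 2 ^ k := by
    rw [← heval, ← hexp]
    have hpos := Real.exp_pos ((k:ℝ) * Real.log 2)
    rw [div_lt_one hpos] at hrx
    exact hrx
  refine ⟨k + 1, by omega, ?_⟩
  have hcast : ((k + 1 : ℕ) : ℝ) = (k:ℝ) + 1 := by push_cast; ring
  rw [hcast, Nat.add_sub_cancel]
  exact hlt

end
end MGAux
/-- Any fitting algorithm for CQs that, on every input collection of
labeled examples for which a strongly most-general fitting CQ exists, outputs a strongly
most-general fitting CQ, is not a sample-efficient PAC learning algorithm. -/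
theorem mostGeneral_fitting_not_sample_efficient_PAC
    (A : CQAlgorithm)
    (hfitting : ∀ (S : Schema) (k : ℕ) (E : LabeledExamples S k),
      (∃ q : CQ S k, q.fits E) → (A S k E).fits E)
    (hmg : ∀ (S : Schema) (k : ℕ) (E : LabeledExamples S k),
      (∃ q : CQ S k, IsStronglyMostGeneralFit q E) →
      IsStronglyMostGeneralFit (A S k E) E) :
    ¬ IsSampleEfficientPAC A := by
  open MGAux in
  rintro ⟨m, ⟨p, hp⟩, hPAC⟩
  classical
  set g : Fin 5 → Polynomial ℝ :=
    ![Polynomial.C 4, Polynomial.C 4, Polynomial.C 6, Polynomial.C 8 * Polynomial.X,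
      Polynomial.C 8 * Polynomial.X] with hg
  set q : Polynomial ℝ := MvPolynomial.eval₂ Polynomial.C g p with hq
  have heq : ∀ n : ℕ, Polynomial.eval (n:ℝ) q
      = MvPolynomial.eval ![(4:ℝ), (4:ℝ), ((6:ℕ):ℝ), ((8*n:ℕ):ℝ), ((8*n:ℕ):ℝ)] p := by
    intro n
    have h1 := MvPolynomial.eval₂_comp_left (Polynomial.evalRingHom ((n:ℝ)))
      (Polynomial.C : ℝ →+* Polynomial ℝ) g p
    have h2 : (Polynomial.evalRingHom ((n:ℝ))).comp (Polynomial.C : ℝ →+* Polynomial ℝ)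
        = RingHom.id ℝ := by
      ext a
      simp
    have h3 : (⇑(Polynomial.evalRingHom ((n:ℝ)))) ∘ g
        = ![(4:ℝ), (4:ℝ), ((6:ℕ):ℝ), ((8*n:ℕ):ℝ), ((8*n:ℕ):ℝ)] := by
      funext i
      fin_cases i <;> simp [hg] <;> push_cast <;> ring
    rw [show Polynomial.eval (n:ℝ) q = Polynomial.evalRingHom ((n:ℝ)) q from rfl, hq, h1, h2, h3]
    rw [MvPolynomial.eval₂_id]
  have hmb : ∀ n : ℕ, (m 4 4 6 (8*n) (8*n) : ℝ) ≤ Polynomial.eval (n:ℝ) q := by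
    intro n
    rw [heq n]
    exact hp 4 4 6 (8*n) (8*n)
  obtain ⟨n, hn2, hqlt⟩ := poly_lt_exp q
  have hnn : 0 < n := by omega
  set N := max (m 4 4 6 (8*n) (8*n)) 1 with hN
  have hNlt : N < 2 ^ (n - 1) := by
    have h1 : (m 4 4 6 (8*n) (8*n) : ℝ) < ((2 ^ (n-1) : ℕ) : ℝ) := by
      push_cast
      exact lt_of_le_of_lt (hmb n) hqlt
    have h2 : m 4 4 6 (8*n) (8*n) < 2 ^ (n-1) := by exact_mod_cast h1
    have h3 : 1 < 2 ^ (n-1) := Nat.one_lt_two_pow (by omega)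
    omega
  have hsupp : ∀ e ∈ (Pd n).support, IsExample e ∧ e.1.facts.ncard ≤ 8*n := by
    intro e he
    obtain ⟨o, rfl⟩ := Pd_supp n e he
    match o with
    | none => exact ⟨fun _ => adom_L n hnn, Lfacts_ncard n⟩
    | some W => exact ⟨fun _ => adom_D n hnn _, Dfacts_ncard n _⟩
  have hqTcard : (qT n).atoms.ncard ≤ 8*n := Lfacts_ncard n
  have hle2 : m (1/(1/4 : ℝ)) (1/(1/4 : ℝ)) Ssch.size (8*n) (8*n) ≤ N := by
    have h14 : (1:ℝ)/(1/4) = 4 := by norm_num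
    rw [h14, size_Ssch]
    exact le_max_left _ _
  have hPAC' := hPAC (1/4) (1/4) (by norm_num) (by norm_num) (by norm_num) (by norm_num)
    Ssch 1 (8*n) (8*n) (Pd n) hsupp (qT n) hqTcard N hle2
  set T : Set (Fin N → PInst Ssch 1) := {s | cqError (Pd n) (qT n)
    (A Ssch 1 (labeledOf (qT n) s)) ≤ ENNReal.ofReal (1/4)} with hT
  have hTzero : ∀ s ∈ T, (∃ i, s i = Lex n) → ∏ i, (Pd n) (s i) = 0 := by
    intro s hsT hex
    by_contra hppos
    have hall : ∀ i, (Pd n) (s i) ≠ 0 := by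
      intro i hz
      exact hppos (Finset.prod_eq_zero (Finset.mem_univ i) hz)
    have hs : ∀ i, ∃ o, s i = phi n o := fun i =>
      Pd_supp n _ ((PMF.mem_support_iff _ _).mpr (hall i))
    have hbad := bad_sample n hnn A hmg hNlt s hs hex
    have hgood : cqError (Pd n) (qT n) (A Ssch 1 (labeledOf (qT n) s))
        ≤ ENNReal.ofReal (1/4) := hsT
    rw [ofReal_quarter] at hgood
    exact absurd hgood (not_le.mpr hbad)
  have hhalf := iid_le_half (Pd n) (Lex n) (Pd_none n hnn) (by omega : 0 < N) T hTzero
  have hfin : ENNReal.ofReal (1 - 1/4) ≤ (2:ENNReal)⁻¹ := le_trans hPAC' hhalf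
  rw [← ofReal_half] at hfin
  have := (ENNReal.ofReal_le_ofReal_iff (by norm_num)).mp hfin
  norm_num at this
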